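/- In the ballot-discrepancy setting, the average discrepancy under the uniform distribution on ballots satisfies (1/N)·∑_{b∈B} D(b) ≥ Δ_T/N − 2κ − max(λ − 1, 0). -/

import Mathlib

open Finset

/-- **Uniform-ballot lower bound.**
In the ballot-discrepancy setting, the average discrepancy under the uniform
distribution on ballots satisfies
`(1/N) ∑_b D(b) ≥ Δ_T/N − 2κ − (λ − 1)₊`. -/
theorem uniform_ballot_lower_bound
    {B I : Type*} [Fintype B] [Nonempty B] [DecidableEq I]
    (ident : B → I)
    (marg : B → ℤ) (hmarg : ∀ b, marg b = -1 ∨ marg b = 0 ∨ marg b = 1)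
    (T : Finset I)
    (v : I → ℤ) (hv : ∀ ι ∈ T, v ι = -1 ∨ v ι = 0 ∨ v ι = 1)
    (D : B → ℤ)
    (hD : ∀ b, D b = if ident b ∈ T then v (ident b) - marg b else 1 - marg b)
    (N M : ℕ) (hN : N = Fintype.card B) (hM : M = T.card)
    (lam κ : ℝ)
    (hlam : lam = (M : ℝ) / (N : ℝ))
    (hκ : κ = ((N : ℝ) - ((Finset.univ.image ident).card : ℝ)) / (N : ℝ))
    (ΔT : ℤ) (hΔT : ΔT = ∑ ι ∈ T, v ι - ∑ b, marg b) :
    (1 / (N : ℝ)) * ∑ b, (D b : ℝ) ≥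
      (ΔT : ℝ) / (N : ℝ) - 2 * κ - max (lam - 1) 0 := by
  classical
  set S : Finset I := Finset.univ.image ident with hSdef
  have hNpos : 0 < N := by rw [hN]; exact Fintype.card_pos
  set f : I → ℤ := fun ι => if ι ∈ T then v ι else 1 with hfdef
  have hfge : ∀ ι, -1 ≤ f ι := by
    intro ι
    simp only [hfdef]
    split_ifs with h
    · rcases hv ι h with h1 | h1 | h1 <;> omega
    · omega
  set c : I → ℕ := fun ι => (Finset.univ.filter fun b => ident b = ι).card with hcdef
  have hDsum : ∑ b, D b = ∑ b, f (ident b) - ∑ b, marg b := by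
    rw [← Finset.sum_sub_distrib]
    apply Finset.sum_congr rfl
    intro b _
    rw [hD b]; simp only [hfdef]; split_ifs <;> ring
  have hcomp : ∑ b, f (ident b) = ∑ ι ∈ S, (c ι : ℤ) * f ι := by
    rw [Finset.sum_comp]
    simp [hcdef, nsmul_eq_mul, hSdef]
  have hc1 : ∀ ι ∈ S, 1 ≤ c ι := by
    intro ι hι
    rw [hSdef] at hι
    obtain ⟨b, _, hb⟩ := Finset.mem_image.mp hι
    have hbm : b ∈ Finset.univ.filter fun b => ident b = ι := by simp [hb]
    exact Finset.card_pos.mpr ⟨b, hbm⟩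
  have hcN : ∑ ι ∈ S, (c ι : ℤ) = N := by
    have h := Finset.card_eq_sum_card_image ident (Finset.univ : Finset B)
    rw [hN, ← Finset.card_univ, h]
    push_cast
    rfl
  have hlow1 : ∑ ι ∈ S, f ι - ((N : ℤ) - S.card) ≤ ∑ ι ∈ S, (c ι : ℤ) * f ι := by
    have hpt : ∀ ι ∈ S, f ι - ((c ι : ℤ) - 1) ≤ (c ι : ℤ) * f ι := by
      intro ι hι
      have h1 := hfge ι
      have h3 : (1 : ℤ) ≤ (c ι : ℤ) := by exact_mod_cast hc1 ι hι
      nlinarith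
    calc ∑ ι ∈ S, f ι - ((N : ℤ) - S.card)
        = ∑ ι ∈ S, (f ι - ((c ι : ℤ) - 1)) := by
          rw [Finset.sum_sub_distrib, Finset.sum_sub_distrib, hcN]
          simp
      _ ≤ ∑ ι ∈ S, (c ι : ℤ) * f ι := Finset.sum_le_sum hpt
  have hsplitS : ∑ ι ∈ S, f ι = ∑ ι ∈ S ∩ T, v ι + ((S \ T).card : ℤ) := by
    rw [← Finset.sum_filter_add_sum_filter_not S (· ∈ T) f]
    congr 1
    · rw [Finset.filter_mem_eq_inter]
      apply Finset.sum_congr rfl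
      intro ι hι
      have := (Finset.mem_inter.mp hι).2
      simp only [hfdef, if_pos this]
    · rw [← Finset.sdiff_eq_filter]
      rw [Finset.sum_congr rfl (fun ι hι => ?_), Finset.sum_const, nsmul_eq_mul, mul_one]
      have := (Finset.mem_sdiff.mp hι).2
      simp only [hfdef, if_neg this]
  have hsplitT : ∑ ι ∈ T, v ι = ∑ ι ∈ S ∩ T, v ι + ∑ ι ∈ T \ S, v ι := by
    rw [Finset.inter_comm]
    exact (Finset.sum_inter_add_sum_sdiff T S v).symm
  have hvdiff : ∑ ι ∈ T \ S, v ι ≤ ((T \ S).card : ℤ) := by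
    have h := Finset.sum_le_card_nsmul (T \ S) v 1
      (fun ι hι => by rcases hv ι (Finset.mem_sdiff.mp hι).1 with h1 | h1 | h1 <;> omega)
    simpa using h
  have c1 : ((S \ T).card : ℤ) + ((S ∩ T).card : ℤ) = S.card := by
    exact_mod_cast Finset.card_sdiff_add_card_inter S T
  have c2 : ((T \ S).card : ℤ) + ((S ∩ T).card : ℤ) = T.card := by
    rw [Finset.inter_comm]
    exact_mod_cast Finset.card_sdiff_add_card_inter T S
  have hM' : (T.card : ℤ) = M := by rw [hM]
  have key : ΔT + 2 * (S.card : ℤ) - N - M ≤ ∑ b, D b := by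
    rw [hΔT, hDsum, hcomp]
    linarith [hlow1, hsplitS, hsplitT, hvdiff, c1, c2]
  -- real part
  have hNR : (0 : ℝ) < N := by exact_mod_cast hNpos
  have hsumR : (ΔT : ℝ) + 2 * (S.card : ℝ) - N - M ≤ ∑ b, (D b : ℝ) := by
    exact_mod_cast key
  have key' : (ΔT : ℝ) - 2 * ((N : ℝ) - S.card) - max ((M : ℝ) - N) 0 ≤ ∑ b, (D b : ℝ) := by
    rcases le_total ((M : ℝ)) ((N : ℝ)) with h | h
    · rw [max_eq_right (by linarith)]; linarith
    · rw [max_eq_left (by linarith)]; linarith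
  have heq : (ΔT : ℝ) / N - 2 * κ - max (lam - 1) 0
      = ((ΔT : ℝ) - 2 * ((N : ℝ) - S.card) - max ((M : ℝ) - N) 0) / N := by
    have h1 : max (lam - 1) 0 = max ((M : ℝ) - N) 0 / N := by
      rw [eq_div_iff (ne_of_gt hNR), max_mul_of_nonneg _ _ (le_of_lt hNR)]
      congr 1
      · rw [hlam]; field_simp
      · simp
    rw [h1, hκ, hSdef]
    field_simp
  rw [heq, ge_iff_le, one_div, inv_mul_eq_div]
  exact div_le_div_of_nonneg_right key' hNR.le
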